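/- arXiv:2603.22835 — 2 statements merged into one kernel-verified Lean document; each statement's English description precedes it below -/
import Mathlib

section
/- (Gaussian tail control at level a via the Lambert critical value.) Let a ∈ (0,1), C > 0, and let Z be a centered Gaussian random variable with variance v satisfying 0 < v ≤ C. Let x > 0 be the unique positive solution of x·exp(x) = 2/(π·a²) and set κ_a = √(C·x). Then P(|Z| > κ_a) ≤ a. -/
open MeasureTheory ProbabilityTheory Real Set

lemma aux_integral_mul_exp {b : ℝ} (hb : 0 < b) (κ : ℝ) :
    ∫ y in Ioi κ, y * Real.exp (-b * y ^ 2) = (2 * b)⁻¹ * Real.exp (-b * κ ^ 2) := by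
  have hderiv : ∀ y ∈ Ici κ, HasDerivAt (fun u => -(2 * b)⁻¹ * Real.exp (-b * u ^ 2))
      (y * Real.exp (-b * y ^ 2)) y := by
    intro y _
    have h1 : HasDerivAt (fun u : ℝ => -b * u ^ 2) (-b * (2 * y)) y := by
      simpa using ((hasDerivAt_pow 2 y).const_mul (-b))
    have h2 := (h1.exp).const_mul (-(2 * b)⁻¹)
    refine h2.congr_deriv ?_
    field_simp
  have hint : IntegrableOn (fun y => y * Real.exp (-b * y ^ 2)) (Ioi κ) :=
    (integrable_mul_exp_neg_mul_sq hb).integrableOn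
  have htend : Filter.Tendsto (fun u => -(2 * b)⁻¹ * Real.exp (-b * u ^ 2))
      Filter.atTop (nhds 0) := by
    rw [show (0:ℝ) = -(2*b)⁻¹ * 0 by ring]
    refine Filter.Tendsto.const_mul _ ?_
    refine Real.tendsto_exp_atBot.comp ?_
    exact Filter.Tendsto.const_mul_atTop_of_neg (by linarith)
      (Filter.tendsto_pow_atTop (by norm_num))
  have := integral_Ioi_of_hasDerivAt_of_tendsto' hderiv hint htend
  rw [this]
  ring

lemma aux_mills {v κ : ℝ} (hv : 0 < v) (hκ : 0 < κ) :
    ∫ y in Ioi κ, Real.exp (-(2*v)⁻¹ * y ^ 2) ≤ (v / κ) * Real.exp (-(2*v)⁻¹ * κ ^ 2) := by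
  have hb : 0 < (2*v)⁻¹ := by positivity
  have h1 : IntegrableOn (fun y => Real.exp (-(2*v)⁻¹ * y ^ 2)) (Ioi κ) :=
    (integrable_exp_neg_mul_sq hb).integrableOn
  have h2 : IntegrableOn (fun y => (y / κ) * Real.exp (-(2*v)⁻¹ * y ^ 2)) (Ioi κ) := by
    have heq : (fun y : ℝ => (y / κ) * Real.exp (-(2*v)⁻¹ * y ^ 2))
        = fun y => κ⁻¹ * (y * Real.exp (-(2*v)⁻¹ * y ^ 2)) := by funext y; ring
    rw [heq]
    exact ((integrable_mul_exp_neg_mul_sq hb).const_mul κ⁻¹).integrableOn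
  calc ∫ y in Ioi κ, Real.exp (-(2*v)⁻¹ * y ^ 2)
      ≤ ∫ y in Ioi κ, (y / κ) * Real.exp (-(2*v)⁻¹ * y ^ 2) := by
        refine setIntegral_mono_on h1 h2 measurableSet_Ioi (fun y hy => ?_)
        have h3 : (1:ℝ) ≤ y / κ := (one_le_div hκ).2 (le_of_lt hy)
        nlinarith [Real.exp_pos (-(2*v)⁻¹ * y ^ 2)]
    _ = κ⁻¹ * ∫ y in Ioi κ, y * Real.exp (-(2*v)⁻¹ * y ^ 2) := by
        rw [← integral_const_mul]
        exact setIntegral_congr_fun measurableSet_Ioi fun y _ => by ring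
    _ = (v / κ) * Real.exp (-(2*v)⁻¹ * κ ^ 2) := by
        rw [aux_integral_mul_exp hb]
        have : (2 * (2*v)⁻¹)⁻¹ = v := by field_simp
        rw [this]; ring

lemma aux_alg {v C a x : ℝ} (hv : 0 < v) (hC : 0 < C) (hvC : v ≤ C)
    (ha : 0 < a) (hx : 0 < x) (hxa : x * Real.exp x = 2 / (π * a ^ 2)) :
    2 * ((Real.sqrt (2 * π * v))⁻¹ *
      ((v / Real.sqrt (C * x)) * Real.exp (-(2*v)⁻¹ * (C * x)))) ≤ a := by
  have hπ : 0 < π := Real.pi_pos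
  set t : ℝ := C * x / v with ht
  have htpos : 0 < t := by positivity
  have hxt : x ≤ t := by
    rw [ht, le_div_iff₀ hv]
    nlinarith
  have hexp : -(2*v)⁻¹ * (C * x) = -t/2 := by
    rw [ht]; field_simp
  have hCx : C * x = v * t := by rw [ht]; field_simp
  have hs1 : (0:ℝ) < Real.sqrt (2 * π * v) := Real.sqrt_pos.2 (by positivity)
  have hs2 : (0:ℝ) < Real.sqrt (C * x) := Real.sqrt_pos.2 (by positivity)
  have hq1 : Real.sqrt (2 * π * v) ^ 2 = 2 * π * v := Real.sq_sqrt (by positivity)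
  have hq2 : Real.sqrt (C * x) ^ 2 = C * x := Real.sq_sqrt (by positivity)
  -- first factor equals sqrt (2 / (π * t))
  have hfac : 2 * ((Real.sqrt (2 * π * v))⁻¹ * (v / Real.sqrt (C * x)))
      = Real.sqrt (2 / (π * t)) := by
    have hnn : (0:ℝ) ≤ 2 * ((Real.sqrt (2 * π * v))⁻¹ * (v / Real.sqrt (C * x))) := by
      positivity
    have hsq : (2 * ((Real.sqrt (2 * π * v))⁻¹ * (v / Real.sqrt (C * x)))) ^ 2
        = 2 / (π * t) := by
      rw [mul_pow, mul_pow, inv_pow, div_pow, hq1, hq2, hCx]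
      field_simp
    rw [← Real.sqrt_sq hnn, hsq]
  -- a equals sqrt (2 / (π * x)) * exp (-x/2)
  have hea : (0:ℝ) < Real.exp x := Real.exp_pos x
  have ha2 : a ^ 2 = 2 / (π * x) * Real.exp (-x) := by
    have hne : π * a ^ 2 ≠ 0 := by positivity
    rw [Real.exp_neg]
    field_simp at hxa ⊢
    nlinarith [hxa]
  have haeq : a = Real.sqrt (2 / (π * x)) * Real.exp (-x / 2) := by
    rw [show -x / 2 = (-x) / 2 by ring, Real.exp_half, ← Real.sqrt_mul (by positivity), ← ha2,
      Real.sqrt_sq ha.le]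
  -- conclude by monotonicity
  calc 2 * ((Real.sqrt (2 * π * v))⁻¹ * ((v / Real.sqrt (C * x)) * Real.exp (-(2*v)⁻¹ * (C * x))))
      = Real.sqrt (2 / (π * t)) * Real.exp (-t / 2) := by rw [← hfac, hexp]; ring
    _ ≤ Real.sqrt (2 / (π * x)) * Real.exp (-x / 2) := by
        refine mul_le_mul (Real.sqrt_le_sqrt ?_) (Real.exp_le_exp.2 (by linarith))
          (Real.exp_pos _).le (Real.sqrt_nonneg _)
        gcongr
    _ = a := haeq.symm

/-- Gaussian tail control at level `a` via the Lambert critical value: if `Z` is a centered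
Gaussian random variable with variance `v`, `0 < v ≤ C`, `a ∈ (0,1)`, `x > 0` solves
`x · exp x = 2/(π a²)` and `κₐ = √(C·x)`, then `P(|Z| > κₐ) ≤ a`. -/
theorem gaussian_tail_le_level_of_lambert
    {Ω : Type*} [MeasurableSpace Ω] (P : Measure Ω) [IsProbabilityMeasure P]
    (Z : Ω → ℝ) (v C a x : ℝ) (hv : 0 < v) (hC : 0 < C) (hvC : v ≤ C)
    (hZ : P.map Z = gaussianReal 0 ⟨v, hv.le⟩)
    (ha : 0 < a) (ha1 : a < 1) (hx : 0 < x)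
    (hxa : x * Real.exp x = 2 / (π * a ^ 2))
    (κ : ℝ) (hκ : κ = Real.sqrt (C * x)) :
    P {ω | κ < |Z ω|} ≤ ENNReal.ofReal a := by
  have hπ : 0 < π := Real.pi_pos
  have hκpos : 0 < κ := by rw [hκ]; exact Real.sqrt_pos.2 (by positivity)
  have hκsq : κ ^ 2 = C * x := by rw [hκ]; exact Real.sq_sqrt (by positivity)
  have hvne : (⟨v, hv.le⟩ : NNReal) ≠ 0 := by
    intro h
    have := congrArg NNReal.toReal h
    exact hv.ne' this
  have hZmeas : AEMeasurable Z P := by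
    by_contra h
    rw [Measure.map_of_not_aemeasurable h] at hZ
    have h1 := (instIsProbabilityMeasureGaussianReal 0 ⟨v, hv.le⟩).measure_univ
    rw [← hZ] at h1
    simp at h1
  have hset : MeasurableSet {z : ℝ | κ < |z|} :=
    measurableSet_lt measurable_const measurable_id.abs
  have h1 : P {ω | κ < |Z ω|} = (gaussianReal 0 ⟨v, hv.le⟩) {z | κ < |z|} := by
    rw [← hZ, Measure.map_apply_of_aemeasurable hZmeas hset]
    rfl
  rw [h1, gaussianReal_apply_eq_integral 0 hvne]
  refine ENNReal.ofReal_le_ofReal ?_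
  set f : ℝ → ℝ := gaussianPDFReal 0 ⟨v, hv.le⟩ with hf
  have hfeq : ∀ z, f z = (Real.sqrt (2 * π * v))⁻¹ * Real.exp (-(2*v)⁻¹ * z ^ 2) := by
    intro z
    simp only [hf, gaussianPDFReal, NNReal.coe_mk, sub_zero, one_div]
    congr 1
    field_simp
    rfl
  have hsets : {z : ℝ | κ < |z|} = Iio (-κ) ∪ Ioi κ := by
    ext z
    simp only [mem_setOf_eq, mem_union, mem_Iio, mem_Ioi, lt_abs, lt_neg]
    tauto
  have hint : Integrable f := integrable_gaussianPDFReal 0 ⟨v, hv.le⟩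
  have hdisj : Disjoint (Iio (-κ)) (Ioi κ) := by
    rw [Set.disjoint_left]
    intro z hz1 hz2
    simp only [mem_Iio] at hz1
    simp only [mem_Ioi] at hz2
    linarith
  rw [hsets, setIntegral_union hdisj measurableSet_Ioi
    hint.integrableOn hint.integrableOn]
  have hsym : ∫ z in Iio (-κ), f z = ∫ z in Ioi κ, f z := by
    rw [← integral_Iic_eq_integral_Iio]
    have heven : ∀ z, f (-z) = f z := by
      intro z
      rw [hfeq, hfeq, neg_pow]
      norm_num
    calc ∫ z in Iic (-κ), f z = ∫ z in Iic (-κ), f (-z) := by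
          exact setIntegral_congr_fun measurableSet_Iic fun z _ => (heven z).symm
      _ = ∫ z in Ioi κ, f z := by simpa using integral_comp_neg_Iic (-κ) f
  rw [hsym]
  have hIoi : ∫ z in Ioi κ, f z
      ≤ (Real.sqrt (2 * π * v))⁻¹ * ((v / κ) * Real.exp (-(2*v)⁻¹ * κ ^ 2)) := by
    have : ∫ z in Ioi κ, f z
        = (Real.sqrt (2 * π * v))⁻¹ * ∫ z in Ioi κ, Real.exp (-(2*v)⁻¹ * z ^ 2) := by
      rw [← integral_const_mul]
      exact setIntegral_congr_fun measurableSet_Ioi fun z _ => hfeq z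
    rw [this]
    have hnn : (0:ℝ) ≤ (Real.sqrt (2 * π * v))⁻¹ := by positivity
    exact mul_le_mul_of_nonneg_left (aux_mills hv hκpos) hnn
  have halg := aux_alg hv hC hvC ha hx hxa
  rw [hκsq] at hIoi
  rw [← hκ] at halg
  linarith
end

section
/- (Component-wise tail bound for the least-squares error.) Let N, K be positive natural numbers, let F be a real N × K matrix with FᵀF invertible, and let e_1, …, e_N be independent real random variables with E[e_j] = 0 and |e_j| ≤ c almost surely, where c > 0. Fix k ∈ {1, …, K} and suppose ((FᵀF)⁻¹)_{kk} > 0. Then for every t > 0, P(|((FᵀF)⁻¹Fᵀe)_k| ≥ t) ≤ 2·exp(−t² / (2 c² ((FᵀF)⁻¹)_{kk})). -/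
open Matrix MeasureTheory ProbabilityTheory

/-- Pointwise convexity bound: for `|x| ≤ m`, `0 < m`,
`exp (l*x) ≤ cosh (l*m) + (x/m) * sinh (l*m)`. -/
lemma exp_le_cosh_add (l m x : ℝ) (hm : 0 < m) (hx : |x| ≤ m) :
    Real.exp (l * x) ≤ Real.cosh (l * m) + (x / m) * Real.sinh (l * m) := by
  obtain ⟨hx1, hx2⟩ := abs_le.mp hx
  set θ : ℝ := (m + x) / (2 * m) with hθ
  have hθ0 : 0 ≤ θ := by rw [hθ]; apply div_nonneg <;> linarith
  have h1θ : 0 ≤ 1 - θ := by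
    have : θ ≤ 1 := by rw [hθ, div_le_one (by linarith)]; linarith
    linarith
  have hconv := convexOn_exp.2 (Set.mem_univ (l * m)) (Set.mem_univ (-(l * m)))
    hθ0 h1θ (by ring)
  have harg : θ • (l * m) + (1 - θ) • (-(l * m)) = l * x := by
    simp only [smul_eq_mul, hθ]
    field_simp
    ring
  rw [harg] at hconv
  refine hconv.trans_eq ?_
  rw [Real.cosh_eq, Real.sinh_eq]
  simp only [smul_eq_mul, hθ]
  field_simp
  ring

/-- Boundedness gives integrability of `exp (l * X)`. -/
lemma integrable_exp_mul_of_bdd {Ω : Type*} [MeasurableSpace Ω] (P : Measure Ω)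
    [IsProbabilityMeasure P] (X : Ω → ℝ) (m : ℝ) (hmeas : Measurable X)
    (hbdd : ∀ᵐ ω ∂P, |X ω| ≤ m) (l : ℝ) :
    Integrable (fun ω => Real.exp (l * X ω)) P := by
  refine Integrable.mono' (integrable_const (Real.exp (|l| * m))) ?_ ?_
  · exact ((hmeas.const_mul l).exp).aestronglyMeasurable
  · filter_upwards [hbdd] with ω hω
    rw [Real.norm_eq_abs, abs_of_pos (Real.exp_pos _), Real.exp_le_exp]
    calc l * X ω ≤ |l * X ω| := le_abs_self _
      _ = |l| * |X ω| := abs_mul _ _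
      _ ≤ |l| * m := by
          apply mul_le_mul_of_nonneg_left hω (abs_nonneg _)

/-- Hoeffding's lemma for symmetric bounds: centered `|X| ≤ m` a.s. gives
`mgf X P l ≤ exp (l² m² / 2)`. -/
lemma mgf_le_of_bdd {Ω : Type*} [MeasurableSpace Ω] (P : Measure Ω)
    [IsProbabilityMeasure P] (X : Ω → ℝ) (m : ℝ) (hm : 0 ≤ m)
    (hmeas : Measurable X) (hint : Integrable X P)
    (hmean : ∫ ω, X ω ∂P = 0) (hbdd : ∀ᵐ ω ∂P, |X ω| ≤ m) (l : ℝ) :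
    mgf X P l ≤ Real.exp (l ^ 2 * m ^ 2 / 2) := by
  rcases hm.eq_or_lt with hm0 | hm0
  · have hX0 : ∀ᵐ ω ∂P, X ω = 0 := by
      filter_upwards [hbdd] with ω hω
      rw [← hm0] at hω
      exact abs_nonpos_iff.mp hω
    have : mgf X P l = 1 := by
      rw [mgf]
      rw [integral_congr_ae (g := fun _ => (1 : ℝ)) ?_]
      · simp
      · filter_upwards [hX0] with ω hω; simp [hω]
    rw [this]
    exact Real.one_le_exp (by positivity)
  · have hRHSint : Integrable
        (fun ω => Real.cosh (l * m) + (X ω / m) * Real.sinh (l * m)) P := by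
      refine (integrable_const _).add ?_
      exact (hint.div_const m).mul_const _
    have h1 : mgf X P l ≤ Real.cosh (l * m) := by
      have hle : ∀ᵐ ω ∂P, Real.exp (l * X ω) ≤
          Real.cosh (l * m) + (X ω / m) * Real.sinh (l * m) := by
        filter_upwards [hbdd] with ω hω
        exact exp_le_cosh_add l m (X ω) hm0 hω
      calc mgf X P l ≤ ∫ ω, (Real.cosh (l * m) + (X ω / m) * Real.sinh (l * m)) ∂P :=
            integral_mono_ae (integrable_exp_mul_of_bdd P X m hmeas hbdd l) hRHSint hle
        _ = Real.cosh (l * m) := by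
            rw [integral_add (integrable_const _) ((hint.div_const m).mul_const _),
              integral_const]
            simp only [measure_univ, ENNReal.toReal_one, smul_eq_mul, one_mul]
            rw [integral_mul_const, integral_div, hmean]
            simp
    calc mgf X P l ≤ Real.cosh (l * m) := h1
      _ ≤ Real.exp ((l * m) ^ 2 / 2) := Real.cosh_le_exp_half_sq _
      _ = Real.exp (l ^ 2 * m ^ 2 / 2) := by ring_nf

/-- One-sided weighted Hoeffding inequality. -/
lemma weighted_hoeffding_one_sided {Ω : Type*} [MeasurableSpace Ω] (P : Measure Ω)
    [IsProbabilityMeasure P] {n : ℕ} (a : Fin n → ℝ) (e : Fin n → Ω → ℝ) (c : ℝ)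
    (hc : 0 < c) (hmeas : ∀ j, Measurable (e j))
    (hindep : iIndepFun e P)
    (hint : ∀ j, Integrable (e j) P) (hmean : ∀ j, ∫ ω, e j ω ∂P = 0)
    (hbdd : ∀ j, ∀ᵐ ω ∂P, |e j ω| ≤ c)
    {S : ℝ} (hS : ∑ j, (a j) ^ 2 = S) (hSpos : 0 < S) (t : ℝ) (ht : 0 < t) :
    (P {ω | t ≤ ∑ j, a j * e j ω}).toReal ≤ Real.exp (-t ^ 2 / (2 * c ^ 2 * S)) := by
  set Y : Fin n → Ω → ℝ := fun j ω => a j * e j ω with hY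
  have hYmeas : ∀ j, Measurable (Y j) := fun j => (hmeas j).const_mul (a j)
  have hYindep : iIndepFun Y P := by
    exact hindep.comp (fun j x => a j * x) (fun j => measurable_const_mul (a j))
  have hYint : ∀ j, Integrable (Y j) P := fun j => (hint j).const_mul (a j)
  have hYmean : ∀ j, ∫ ω, Y j ω ∂P = 0 := by
    intro j; simp only [hY]; rw [integral_const_mul, hmean j, mul_zero]
  have hYbdd : ∀ j, ∀ᵐ ω ∂P, |Y j ω| ≤ |a j| * c := by
    intro j
    filter_upwards [hbdd j] with ω hω
    rw [abs_mul]
    exact mul_le_mul_of_nonneg_left hω (abs_nonneg _)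
  set l : ℝ := t / (c ^ 2 * S) with hl
  have hl0 : 0 < l := by positivity
  have hYexpint : ∀ j, Integrable (fun ω => Real.exp (l * Y j ω)) P := fun j =>
    integrable_exp_mul_of_bdd P (Y j) (|a j| * c) (hYmeas j) (hYbdd j) l
  have hsum_int : Integrable (fun ω => Real.exp (l * (∑ j, Y j) ω)) P := by
    exact hYindep.integrable_exp_mul_sum hYmeas (fun j _ => hYexpint j)
  have hset : {ω | t ≤ ∑ j, a j * e j ω} = {ω | t ≤ (∑ j, Y j) ω} := by
    ext ω; simp [hY]
  have hchernoff := measure_ge_le_exp_mul_mgf (X := ∑ j, Y j) (μ := P) t hl0.le hsum_int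
  have hmgf : mgf (∑ j, Y j) P l ≤ Real.exp (l ^ 2 * c ^ 2 * S / 2) := by
    rw [hYindep.mgf_sum hYmeas]
    calc ∏ j, mgf (Y j) P l ≤ ∏ j, Real.exp (l ^ 2 * (|a j| * c) ^ 2 / 2) := by
          apply Finset.prod_le_prod
          · intro j _; exact mgf_nonneg
          · intro j _
            exact mgf_le_of_bdd P (Y j) (|a j| * c) (by positivity) (hYmeas j)
              (hYint j) (hYmean j) (hYbdd j) l
      _ = Real.exp (∑ j, l ^ 2 * (|a j| * c) ^ 2 / 2) := by
          rw [Real.exp_sum]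
      _ = Real.exp (l ^ 2 * c ^ 2 * S / 2) := by
          congr 1
          rw [← hS, Finset.mul_sum, Finset.sum_div]
          apply Finset.sum_congr rfl
          intro j _
          rw [mul_pow, sq_abs]; ring
  rw [hset]
  calc (P {ω | t ≤ (∑ j, Y j) ω}).toReal
      ≤ Real.exp (-l * t) * mgf (∑ j, Y j) P l := hchernoff
    _ ≤ Real.exp (-l * t) * Real.exp (l ^ 2 * c ^ 2 * S / 2) := by
        exact mul_le_mul_of_nonneg_left hmgf (Real.exp_nonneg _)
    _ = Real.exp (-l * t + l ^ 2 * c ^ 2 * S / 2) := (Real.exp_add _ _).symm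
    _ = Real.exp (-t ^ 2 / (2 * c ^ 2 * S)) := by
        congr 1
        rw [hl]
        field_simp
        ring

/-- Component-wise tail bound for the least-squares error: if the regression errors
`e 1, …, e N` are independent, centered and bounded by `c > 0` almost surely, then for each `k`
with `((FᵀF)⁻¹)ₖₖ > 0` and every `t > 0`,
`P(|((FᵀF)⁻¹Fᵀe)ₖ| ≥ t) ≤ 2 exp(−t² / (2 c² ((FᵀF)⁻¹)ₖₖ))`. -/
theorem least_squares_component_tail_bound
    {Ω : Type*} [MeasurableSpace Ω] (P : Measure Ω) [IsProbabilityMeasure P]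
    (N K : ℕ) (hN : 0 < N) (hK : 0 < K)
    (F : Matrix (Fin N) (Fin K) ℝ) (hF : IsUnit (Fᵀ * F))
    (e : Fin N → Ω → ℝ) (c : ℝ) (hc : 0 < c)
    (hmeas : ∀ j, Measurable (e j))
    (hindep : iIndepFun e P)
    (hint : ∀ j, Integrable (e j) P)
    (hmean : ∀ j, ∫ ω, e j ω ∂P = 0)
    (hbdd : ∀ j, ∀ᵐ ω ∂P, |e j ω| ≤ c)
    (k : Fin K) (hkk : 0 < (Fᵀ * F)⁻¹ k k) (t : ℝ) (ht : 0 < t) :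
    P {ω | t ≤ |((Fᵀ * F)⁻¹ * Fᵀ).mulVec (fun j => e j ω) k|} ≤
      ENNReal.ofReal (2 * Real.exp (-t ^ 2 / (2 * c ^ 2 * (Fᵀ * F)⁻¹ k k))) := by
  set M : Matrix (Fin K) (Fin N) ℝ := (Fᵀ * F)⁻¹ * Fᵀ with hM
  set a : Fin N → ℝ := fun j => M k j with ha
  -- the squared norm of the k-th row of M equals ((FᵀF)⁻¹)ₖₖ
  have hdet : IsUnit (Fᵀ * F).det := (Matrix.isUnit_iff_isUnit_det _).mp hF
  have hsymm : (Fᵀ * F)ᵀ = Fᵀ * F := by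
    rw [Matrix.transpose_mul, Matrix.transpose_transpose]
  have hMMT : M * Mᵀ = (Fᵀ * F)⁻¹ := by
    rw [hM, Matrix.transpose_mul, Matrix.transpose_nonsing_inv, hsymm,
      Matrix.transpose_transpose]
    calc (Fᵀ * F)⁻¹ * Fᵀ * (F * (Fᵀ * F)⁻¹)
        = (Fᵀ * F)⁻¹ * (Fᵀ * F) * (Fᵀ * F)⁻¹ := by
          simp only [Matrix.mul_assoc]
      _ = (Fᵀ * F)⁻¹ := by rw [Matrix.nonsing_inv_mul _ hdet, Matrix.one_mul]
  have hS : ∑ j, (a j) ^ 2 = (Fᵀ * F)⁻¹ k k := by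
    have := congrFun (congrFun hMMT k) k
    rw [Matrix.mul_apply] at this
    rw [← this]
    apply Finset.sum_congr rfl
    intro j _
    rw [Matrix.transpose_apply, sq]
  -- rewrite the mulVec as a sum
  have hmv : ∀ ω, M.mulVec (fun j => e j ω) k = ∑ j, a j * e j ω := by
    intro ω
    simp [Matrix.mulVec, dotProduct, ha]
  -- union bound on the absolute value
  have hsub : {ω | t ≤ |M.mulVec (fun j => e j ω) k|} ⊆
      {ω | t ≤ ∑ j, a j * e j ω} ∪ {ω | t ≤ ∑ j, (-a j) * e j ω} := by
    intro ω hω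
    simp only [Set.mem_setOf_eq, hmv] at hω
    rcases le_abs.mp hω with h | h
    · left; exact h
    · right
      simp only [Set.mem_setOf_eq, neg_mul]
      rw [Finset.sum_neg_distrib]
      exact h
  have h1 := weighted_hoeffding_one_sided P a e c hc hmeas hindep hint hmean hbdd
    hS hkk t ht
  have hS' : ∑ j, (-a j) ^ 2 = (Fᵀ * F)⁻¹ k k := by
    rw [← hS]; apply Finset.sum_congr rfl; intro j _; rw [neg_sq]
  have h2 := weighted_hoeffding_one_sided P (fun j => -a j) e c hc hmeas hindep hint
    hmean hbdd hS' hkk t ht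
  have hb1 : P {ω | t ≤ ∑ j, a j * e j ω} ≤
      ENNReal.ofReal (Real.exp (-t ^ 2 / (2 * c ^ 2 * (Fᵀ * F)⁻¹ k k))) :=
    (ENNReal.le_ofReal_iff_toReal_le (measure_ne_top P _) (Real.exp_nonneg _)).mpr h1
  have hb2 : P {ω | t ≤ ∑ j, (-a j) * e j ω} ≤
      ENNReal.ofReal (Real.exp (-t ^ 2 / (2 * c ^ 2 * (Fᵀ * F)⁻¹ k k))) :=
    (ENNReal.le_ofReal_iff_toReal_le (measure_ne_top P _) (Real.exp_nonneg _)).mpr h2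
  calc P {ω | t ≤ |M.mulVec (fun j => e j ω) k|}
      ≤ P ({ω | t ≤ ∑ j, a j * e j ω} ∪ {ω | t ≤ ∑ j, (-a j) * e j ω}) :=
        measure_mono hsub
    _ ≤ P {ω | t ≤ ∑ j, a j * e j ω} + P {ω | t ≤ ∑ j, (-a j) * e j ω} :=
        measure_union_le _ _
    _ ≤ ENNReal.ofReal (Real.exp (-t ^ 2 / (2 * c ^ 2 * (Fᵀ * F)⁻¹ k k))) +
        ENNReal.ofReal (Real.exp (-t ^ 2 / (2 * c ^ 2 * (Fᵀ * F)⁻¹ k k))) :=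
        add_le_add hb1 hb2
    _ = ENNReal.ofReal (2 * Real.exp (-t ^ 2 / (2 * c ^ 2 * (Fᵀ * F)⁻¹ k k))) := by
        rw [← ENNReal.ofReal_add (Real.exp_nonneg _) (Real.exp_nonneg _)]
        congr 1
        ring
end
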